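/- Fix M ≥ 1, c < 1 and t0 ∈ ℕ. Let γ, β ∈ [0,1], let A be a real M×M matrix with A_{ij} ≥ 0 for all i, j, set P := (1−γ)·Id + β·A, and let v ∈ ℝ^M with v_i ≥ 0 for all i satisfy vᵀ P = λ vᵀ for some real λ with 0 ≤ λ ≤ c. Suppose I : ℕ → ℝ^M satisfies 0 ≤ I_i(t) ≤ 1 for all i, t, and I(t+1) = ((1−γ)·Id + diag(𝟏−I(t))·β·A)·I(t) for all t ≥ t0. Then vᵀ I(t) ≤ c^{t−t0} · (vᵀ I(t0)) for all t ≥ t0. -/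

import Mathlib

/-- Bound (B2) of the appendix: if `v ⪰ 0` is a left eigenvector of
`P = (1−γ)·Id + β·A` with eigenvalue `0 ≤ λ ≤ c < 1`, then along the SIS dynamics
`I(t+1) = ((1−γ)·Id + diag(𝟏−I(t))·β·A)·I(t)` one has
`vᵀ I(t) ≤ c^(t−t0) · vᵀ I(t0)` for all `t ≥ t0`. -/
theorem stmt_12 (M : ℕ) (hM : 1 ≤ M) (c : ℝ) (hc : c < 1) (t0 : ℕ)
    (γ β : ℝ) (hγ : γ ∈ Set.Icc (0 : ℝ) 1) (hβ : β ∈ Set.Icc (0 : ℝ) 1)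
    (A : Matrix (Fin M) (Fin M) ℝ) (hA : ∀ i j, 0 ≤ A i j)
    (v : Fin M → ℝ) (hv : ∀ i, 0 ≤ v i) (l : ℝ) (hl0 : 0 ≤ l) (hlc : l ≤ c)
    (heig : Matrix.vecMul v ((1 - γ) • (1 : Matrix (Fin M) (Fin M) ℝ) + β • A) = l • v)
    (I : ℕ → Fin M → ℝ) (hI : ∀ t i, 0 ≤ I t i ∧ I t i ≤ 1)
    (hdyn : ∀ t ≥ t0, I (t + 1)
      = (((1 - γ) • (1 : Matrix (Fin M) (Fin M) ℝ)
          + (Matrix.diagonal fun k => 1 - I t k) * (β • A))).mulVec (I t)) :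
    ∀ t ≥ t0, ∑ i, v i * I t i ≤ c ^ (t - t0) * ∑ i, v i * I t0 i := by
  have hc0 : 0 ≤ c := le_trans hl0 hlc
  set P : Matrix (Fin M) (Fin M) ℝ :=
    (1 - γ) • (1 : Matrix (Fin M) (Fin M) ℝ) + β • A with hP
  have hSnn : ∀ t, 0 ≤ ∑ i, v i * I t i := by
    intro t
    exact Finset.sum_nonneg fun i _ => mul_nonneg (hv i) (hI t i).1
  have step : ∀ t ≥ t0, ∑ i, v i * I (t + 1) i ≤ c * ∑ i, v i * I t i := by
    intro t ht
    have key : ∑ i, v i * I (t + 1) i ≤ ∑ i, v i * (P.mulVec (I t)) i := by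
      apply Finset.sum_le_sum
      intro i _
      apply mul_le_mul_of_nonneg_left _ (hv i)
      rw [hdyn t ht]
      simp only [Matrix.add_mulVec, Matrix.smul_mulVec, Matrix.one_mulVec,
        Matrix.mulVec, dotProduct, Pi.add_apply, Pi.smul_apply, smul_eq_mul, hP]
      apply Finset.sum_le_sum
      intro j _
      simp only [Matrix.add_apply, Matrix.smul_apply, smul_eq_mul]
      rw [add_mul, add_mul]
      apply add_le_add_right
      rw [Matrix.diagonal_mul]
      simp only [Matrix.smul_apply, smul_eq_mul]
      have hnn : 0 ≤ β * A i j * I t j :=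
        mul_nonneg (mul_nonneg hβ.1 (hA i j)) (hI t j).1
      nlinarith [(hI t i).1, (hI t i).2]
    have heq : ∑ i, v i * (P.mulVec (I t)) i = l * ∑ i, v i * I t i := by
      have := Matrix.dotProduct_mulVec v P (I t)
      rw [heig] at this
      simpa [dotProduct, Finset.mul_sum, mul_assoc] using this
    calc ∑ i, v i * I (t + 1) i ≤ l * ∑ i, v i * I t i := by rw [← heq]; exact key
      _ ≤ c * ∑ i, v i * I t i := mul_le_mul_of_nonneg_right hlc (hSnn t)
  intro t ht
  induction t with
  | zero =>
    have : t0 = 0 := Nat.le_zero.mp ht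
    subst this; simp
  | succ n ih =>
    rcases Nat.lt_or_ge t0 (n + 1) with h | h
    · have hn : t0 ≤ n := Nat.lt_succ_iff.mp h
      have := ih hn
      calc ∑ i, v i * I (n + 1) i ≤ c * ∑ i, v i * I n i := step n hn
        _ ≤ c * (c ^ (n - t0) * ∑ i, v i * I t0 i) :=
            mul_le_mul_of_nonneg_left this hc0
        _ = c ^ (n + 1 - t0) * ∑ i, v i * I t0 i := by
            rw [Nat.succ_sub hn, pow_succ]; ring
    · have : t0 = n + 1 := le_antisymm ht h
      subst this; simp
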